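/- Let M be a simple connected matroid of rank r ≥ 3 on a finite ground set whose lattice of flats is modular, and let G be a rank-3 flat of M. Then the restriction M_G is a connected modular matroid of rank 3 in which every rank-2 flat contains at least 3 elements (i.e., M_G is a rank-3 connected projective geometry). -/

import Mathlib

/-! Self-contained definitions: matroid minors, rank, flats, the Möbius function of the
lattice of flats, the characteristic polynomial, the defining axioms of the
(inverse) Kazhdan–Lusztig polynomials of a matroid, and basic structural notions
(circuits, connectivity, simplicity, representability, modularity). -/

open Polynomial Matroid

namespace KL

variable {α : Type} [Fintype α]

/-- The deletion of a set `D` from the matroid `M`. -/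
def del (M : Matroid α) (D : Set α) : Matroid α := M ↾ (M.E \ D)

/-- The contraction of the matroid `M` by the set `C`, defined by duality. -/
def con (M : Matroid α) (C : Set α) : Matroid α := (del M✶ C)✶

/-- The rank of a matroid on a finite ground set: the maximal size of an independent set. -/
noncomputable def rk (M : Matroid α) : ℕ := sSup {n | ∃ I, M.Indep I ∧ I.ncard = n}

/-- The rank of a set `X` in a matroid `M`. -/
noncomputable def rkSet (M : Matroid α) (X : Set α) : ℕ := rk (M ↾ X)

/-- A matroid is loopless if every singleton of its ground set is independent. -/
def Loopless (M : Matroid α) : Prop := ∀ e ∈ M.E, M.Indep {e}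

/-- A circuit of a matroid is a minimal dependent set. -/
def Circuit (M : Matroid α) (C : Set α) : Prop :=
  M.Dep C ∧ ∀ D, M.Dep D → D ⊆ C → D = C

/-- A matroid is connected if its ground set is nonempty and every two distinct
elements of the ground set lie in a common circuit. -/
def Connected (M : Matroid α) : Prop :=
  M.E.Nonempty ∧ ∀ e f, e ∈ M.E → f ∈ M.E → e ≠ f → ∃ C, Circuit M C ∧ e ∈ C ∧ f ∈ C

/-- A matroid is simple if it has no loops and no pair of parallel elements; equivalently,
every subset of the ground set with at most two elements is independent. -/
def Simple (M : Matroid α) : Prop :=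
  ∀ I : Set α, I ⊆ M.E → I.ncard ≤ 2 → M.Indep I

/-- A matroid is representable over a field `𝔽` if there is an assignment of vectors to the
elements of the ground set such that independence coincides with linear independence. -/
def Representable (M : Matroid α) (𝔽 : Type) [Field 𝔽] : Prop :=
  ∃ (n : ℕ) (φ : α → (Fin n → 𝔽)), ∀ I : Set α,
    M.Indep I ↔ (I ⊆ M.E ∧ LinearIndependent 𝔽 (fun x : I => φ x))

/-- A matroid is regular if it is representable over every field. -/
def Regular (M : Matroid α) : Prop := ∀ (𝔽 : Type) (_ : Field 𝔽), Representable M 𝔽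

/-- The lattice of flats of `M` is modular: `rk F + rk G = rk (F ∨ G) + rk (F ∧ G)` for all
flats `F, G`, where the join of two flats is the closure of their union and their meet is
their intersection. -/
def ModularFlats (M : Matroid α) : Prop :=
  ∀ F G : Set α, M.IsFlat F → M.IsFlat G →
    rkSet M F + rkSet M G = rkSet M (M.closure (F ∪ G)) + rkSet M (F ∩ G)

open Classical in
/-- The finset of flats of a matroid on a finite ground set. -/
noncomputable def flats (M : Matroid α) : Finset (Set α) :=
  Finset.univ.filter fun F => M.IsFlat F

open Classical in
/-- The Möbius function of the lattice of flats of `M`, as a function on pairs of sets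
(zero when either set is not a flat, and zero on non-ordered pairs of flats). -/
noncomputable def mob (M : Matroid α) (F G : Set α) : ℤ :=
  letI : LocallyFiniteOrder {X : Set α // M.IsFlat X} := Fintype.toLocallyFiniteOrder
  if hF : M.IsFlat F then
    if hG : M.IsFlat G then
      IncidenceAlgebra.mu ℤ (⟨F, hF⟩ : {X : Set α // M.IsFlat X}) ⟨G, hG⟩
    else 0
  else 0

open Classical in
/-- The doubly-indexed Whitney numbers of the first kind:
`w_{i,j} = Σ μ(F,G)` over pairs of flats `F ⊆ G` with `rk F = i` and `rk G = j`. -/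
noncomputable def whitney (M : Matroid α) (i j : ℕ) : ℤ :=
  ∑ F ∈ flats M, ∑ G ∈ flats M,
    if rkSet M F = i ∧ rkSet M G = j ∧ F ⊆ G then mob M F G else 0

/-- The characteristic polynomial `χ_M(t) = Σ_{F ∈ L(M)} μ(∅,F) t^(r - rk F)`
of a (loopless) matroid. -/
noncomputable def chi (M : Matroid α) : Polynomial ℤ :=
  ∑ F ∈ flats M, C (mob M ∅ F) * X ^ (rk M - rkSet M F)

/-- The defining axioms of the Kazhdan–Lusztig polynomial assignment `M ↦ P_M(t)`:
`P_M = 1` in rank `0`; `deg P_M < r/2` for `r > 0`; and the defining recursion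
`t^r P_M(t⁻¹) = Σ_{F ∈ L(M)} χ_{M_F}(t) P_{M^F}(t)`, where `t^r P_M(t⁻¹)` is
formalized as `reflect r P_M`. -/
def IsKLPolynomial (P : Matroid α → Polynomial ℤ) : Prop :=
  (∀ N : Matroid α, Loopless N → rk N = 0 → P N = 1) ∧
  (∀ N : Matroid α, Loopless N → 0 < rk N → 2 * (P N).natDegree < rk N) ∧
  (∀ N : Matroid α, Loopless N →
    (P N).reflect (rk N) = ∑ F ∈ flats N, chi (N ↾ F) * P (con N F))

/-- The defining axioms of the inverse Kazhdan–Lusztig polynomial assignment `M ↦ Q_M(t)`: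
`Q_M = 1` in rank `0`; `deg Q_M < r/2` for `r > 0`; and the defining recursion
`(-1)^r t^r Q_M(t⁻¹) = Σ_{F ∈ L(M)} (-1)^(rk F) Q_{M_F}(t) · t^(r - rk F) χ_{M^F}(t⁻¹)`,
where `t^k p(t⁻¹)` is formalized as `reflect k p`. -/
def IsInvKLPolynomial (Q : Matroid α → Polynomial ℤ) : Prop :=
  (∀ N : Matroid α, Loopless N → rk N = 0 → Q N = 1) ∧
  (∀ N : Matroid α, Loopless N → 0 < rk N → 2 * (Q N).natDegree < rk N) ∧
  (∀ N : Matroid α, Loopless N →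
    (-1 : Polynomial ℤ) ^ (rk N) * (Q N).reflect (rk N) =
      ∑ F ∈ flats N, (-1 : Polynomial ℤ) ^ (rkSet N F) * Q (N ↾ F) *
        (chi (con N F)).reflect (rk N - rkSet N F))

section Aux
open Set

variable {M : Matroid α} {X Y G F I : Set α}

lemma aux_bddAbove (M : Matroid α) : BddAbove {n | ∃ I, M.Indep I ∧ I.ncard = n} := by
  refine ⟨Fintype.card α, fun n hn => ?_⟩
  obtain ⟨I, -, rfl⟩ := hn
  have := Set.ncard_le_ncard (Set.subset_univ I) Set.finite_univ
  simpa [Set.ncard_univ] using this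

lemma ncard_le_rk (h : M.Indep I) : I.ncard ≤ rk M :=
  le_csSup (aux_bddAbove M) ⟨I, h, rfl⟩

lemma exists_indep_rk (M : Matroid α) : ∃ I, M.Indep I ∧ I.ncard = rk M := by
  have h0 : (0 : ℕ) ∈ {n | ∃ I, M.Indep I ∧ I.ncard = n} :=
    ⟨∅, M.empty_indep, Set.ncard_empty α⟩
  exact Nat.sSup_mem ⟨0, h0⟩ (aux_bddAbove M)

lemma rkSet_le_ncard (M : Matroid α) (X : Set α) : rkSet M X ≤ X.ncard := by
  obtain ⟨I, hI, hcard⟩ := exists_indep_rk (M ↾ X)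
  rw [Matroid.restrict_indep_iff] at hI
  rw [rkSet, ← hcard]
  exact Set.ncard_le_ncard hI.2 (Set.toFinite X)

lemma rkSet_mono (M : Matroid α) (h : X ⊆ Y) : rkSet M X ≤ rkSet M Y := by
  obtain ⟨I, hI, hcard⟩ := exists_indep_rk (M ↾ X)
  rw [Matroid.restrict_indep_iff] at hI
  rw [rkSet, ← hcard]
  exact ncard_le_rk (Matroid.restrict_indep_iff.2 ⟨hI.1, hI.2.trans h⟩)

lemma indep_rkSet (h : M.Indep I) : rkSet M I = I.ncard :=
  le_antisymm (rkSet_le_ncard M I)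
    (ncard_le_rk (Matroid.restrict_indep_iff.2 ⟨h, Subset.rfl⟩))

lemma basis_rkSet (hI : M.IsBasis I X) : rkSet M X = I.ncard := by
  refine le_antisymm ?_ (ncard_le_rk hI.restrict_isBase.indep)
  obtain ⟨J, hJ, hcard⟩ := exists_indep_rk (M ↾ X)
  rw [Matroid.restrict_indep_iff] at hJ
  rw [rkSet, ← hcard]
  obtain ⟨J', hJ', hJJ'⟩ := hJ.1.subset_isBasis_of_subset hJ.2 hI.subset_ground
  have henc : J'.encard = I.encard := hJ'.encard_eq_encard hI
  have : J'.ncard = I.ncard := by rw [Set.ncard_def, Set.ncard_def, henc]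
  exact le_trans (Set.ncard_le_ncard hJJ' (Set.toFinite J')) this.le

lemma rkSet_closure (M : Matroid α) (hX : X ⊆ M.E) : rkSet M (M.closure X) = rkSet M X := by
  obtain ⟨I, hI⟩ := M.exists_isBasis X hX
  rw [basis_rkSet hI.isBasis_closure_right, basis_rkSet hI]

lemma rkSet_empty (M : Matroid α) : rkSet M ∅ = 0 := by
  simpa using rkSet_le_ncard M ∅

lemma dep_rkSet_lt (h : M.Dep X) : rkSet M X < X.ncard := by
  refine lt_of_le_of_ne (rkSet_le_ncard M X) fun he => h.not_indep ?_
  obtain ⟨I, hI, hcard⟩ := exists_indep_rk (M ↾ X)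
  rw [Matroid.restrict_indep_iff] at hI
  rw [rkSet] at he
  have : I = X := Set.eq_of_subset_of_ncard_le hI.2 (by omega) (Set.toFinite X)
  exact this ▸ hI.1

lemma closure_flat' (M : Matroid α) (X : Set α) : M.IsFlat (M.closure X) := by
  rw [Matroid.closure_def]
  have hne : Nonempty {F // M.IsFlat F ∧ X ∩ M.E ⊆ F} :=
    ⟨⟨M.E, M.ground_isFlat, Set.inter_subset_right⟩⟩
  have h := Matroid.IsFlat.iInter (M := M)
    (Fs := fun F : {F // M.IsFlat F ∧ X ∩ M.E ⊆ F} => F.1) (fun F => F.2.1)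
  convert h using 1
  rw [Set.sInter_eq_iInter]
  rfl

lemma flat_of_closure (h : M.closure F = F) : M.IsFlat F := h ▸ closure_flat' M F

lemma restrict_closure' (M : Matroid α) (hG : G ⊆ M.E) (hX : X ⊆ G) :
    (M ↾ G).closure X = M.closure X ∩ G := by
  obtain ⟨I, hI⟩ := M.exists_isBasis X (hX.trans hG)
  have hI' : (M ↾ G).IsBasis I X := by
    rw [← Matroid.isBase_restrict_iff (show X ⊆ (M ↾ G).E from hX),
      M.restrict_restrict_eq hX]
    exact hI.restrict_isBase
  rw [← hI'.closure_eq_closure, ← hI.closure_eq_closure]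
  have hIG : I ⊆ G := hI.subset.trans hX
  ext e
  rw [hI'.indep.mem_closure_iff', Set.mem_inter_iff, hI.indep.mem_closure_iff',
    Matroid.restrict_indep_iff, Matroid.restrict_ground_eq]
  constructor
  · rintro ⟨heG, himp⟩
    exact ⟨⟨hG heG, fun h => himp ⟨h, Set.insert_subset heG hIG⟩⟩, heG⟩
  · rintro ⟨⟨-, himp⟩, heG⟩
    exact ⟨heG, fun h => himp h.1⟩

lemma flat_restrict_iff' (hG : M.IsFlat G) : (M ↾ G).IsFlat F ↔ M.IsFlat F ∧ F ⊆ G := by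
  constructor
  · intro hF
    have hFG : F ⊆ G := hF.subset_ground
    have h1 : (M ↾ G).closure F = F := hF.closure
    rw [restrict_closure' M hG.subset_ground hFG] at h1
    have h2 : M.closure F ⊆ G := by
      have := M.closure_subset_closure hFG
      rwa [hG.closure] at this
    exact ⟨flat_of_closure ((Set.inter_eq_left.2 h2).symm.trans h1), hFG⟩
  · rintro ⟨hF, hFG⟩
    refine flat_of_closure (M := M ↾ G) ?_
    rw [restrict_closure' M hG.subset_ground hFG, hF.closure, Set.inter_eq_left.2 hFG]

lemma rkSet_restrict (M : Matroid α) (h : X ⊆ G) : rkSet (M ↾ G) X = rkSet M X := by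
  rw [rkSet, rkSet, M.restrict_restrict_eq h]

end Aux


lemma line_three {M : Matroid α} (hc : Connected M) (hmod : ModularFlats M)
    {F : Set α} (hF : M.IsFlat F) (hFr : rkSet M F = 2) : 3 ≤ F.ncard := by
  by_contra hlt
  push_neg at hlt
  obtain ⟨I, hI⟩ := M.exists_isBasis F hF.subset_ground
  have hIcard : I.ncard = 2 := by rw [← basis_rkSet hI, hFr]
  have hFI : I = F :=
    Set.eq_of_subset_of_ncard_le hI.subset (by omega) (Set.toFinite F)
  obtain ⟨a, b, hab, hIab⟩ := Set.ncard_eq_two.1 hIcard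
  have haE : a ∈ M.E := hI.indep.subset_ground (hIab ▸ (by simp : a ∈ ({a,b} : Set α)))
  have hbE : b ∈ M.E := hI.indep.subset_ground (hIab ▸ (by simp : b ∈ ({a,b} : Set α)))
  obtain ⟨C, hC, haC, hbC⟩ := hc.2 a b haE hbE hab
  have hCE : C ⊆ M.E := hC.1.subset_ground
  have hdiff : ∀ x ∈ C, M.Indep (C \ {x}) := by
    intro x hx
    by_contra hdep
    have hD : M.Dep (C \ {x}) := ⟨hdep, Set.diff_subset.trans hCE⟩
    have heq := hC.2 _ hD Set.diff_subset
    rw [← heq] at hx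
    exact hx.2 rfl
  set D := C \ ({a, b} : Set α) with hDdef
  have hDa : D ⊆ C \ {a} := Set.diff_subset_diff_right (by simp)
  have hD_indep : M.Indep D := (hdiff a haC).subset hDa
  have hDE : D ⊆ M.E := Set.diff_subset.trans hCE
  have haD : a ∉ M.closure D := by
    have h1 := (hdiff b hbC).notMem_closure_diff_of_mem
      (show a ∈ C \ {b} from ⟨haC, by simpa using hab⟩)
    have : (C \ {b}) \ {a} = D := by
      rw [hDdef]; ext x; simp; tauto
    rwa [this] at h1
  have hbD : b ∉ M.closure D := by
    have h1 := (hdiff a haC).notMem_closure_diff_of_mem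
      (show b ∈ C \ {a} from ⟨hbC, by simpa using hab.symm⟩)
    have : (C \ {a}) \ {b} = D := by
      rw [hDdef]; ext x; simp; tauto
    rwa [this] at h1
  set F2 := M.closure D with hF2def
  have hmod' := hmod F F2 hF (closure_flat' M D)
  have hrF2 : rkSet M F2 = D.ncard := by
    rw [hF2def, rkSet_closure M hDE, indep_rkSet hD_indep]
  have hinter : F ∩ F2 = ∅ := by
    rw [← hFI, hIab]
    ext x
    simp only [Set.mem_inter_iff, Set.mem_insert_iff, Set.mem_singleton_iff,
      Set.mem_empty_iff_false, iff_false, not_and]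
    rintro (rfl | rfl) <;> assumption
  have habC : ({a, b} : Set α) ⊆ C := by
    rintro x (rfl | rfl); exact haC; simpa
  have hsub : M.closure (F ∪ F2) ⊆ M.closure C := by
    refine Matroid.closure_subset_closure_of_subset_closure (Set.union_subset ?_ ?_)
    · rw [← hFI, hIab]
      exact habC.trans (M.subset_closure C hCE)
    · exact M.closure_subset_closure Set.diff_subset
  have hub : rkSet M (M.closure (F ∪ F2)) ≤ rkSet M C := by
    have := rkSet_mono M hsub
    rwa [rkSet_closure M hCE] at this
  have hdep : rkSet M C < C.ncard := dep_rkSet_lt hC.1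
  have hCcard : C.ncard = D.ncard + 2 := by
    have h1 := Set.ncard_diff habC (Set.toFinite _)
    have h2 := Set.ncard_le_ncard habC (Set.toFinite C)
    rw [Set.ncard_pair hab] at h1 h2
    rw [hDdef, h1]
    omega
  rw [hFr, hrF2, hinter, rkSet_empty] at hmod'
  omega


/-- Let `M` be a simple connected matroid of rank `r ≥ 3` on a finite ground
set whose lattice of flats is modular, and let `G` be a rank-3 flat of `M`. Then the
restriction `M_G` is a connected modular matroid of rank `3` in which every rank-2 flat
contains at least `3` elements (i.e., `M_G` is a rank-3 connected projective geometry). -/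
theorem restriction_to_rank_three_flat {α : Type} [Fintype α] (M : Matroid α)
    (hs : Simple M) (hc : Connected M) (hr : 3 ≤ rk M) (hmod : ModularFlats M)
    (G : Set α) (hG : M.IsFlat G) (hG3 : rkSet M G = 3) :
    rk (M ↾ G) = 3 ∧ Connected (M ↾ G) ∧ ModularFlats (M ↾ G) ∧
      ∀ F : Set α, (M ↾ G).IsFlat F → rkSet (M ↾ G) F = 2 → 3 ≤ F.ncard := by
  have hGE : G ⊆ M.E := hG.subset_ground
  refine ⟨hG3, ?_, ?_, ?_⟩
  · -- Connected
    constructor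
    · -- nonempty
      rw [Matroid.restrict_ground_eq]
      rcases Set.eq_empty_or_nonempty G with rfl | hne
      · rw [show rkSet M ∅ = 0 from rkSet_empty M] at hG3; omega
      · exact hne
    · intro e f he hf hef
      rw [Matroid.restrict_ground_eq] at he hf
      have hpairE : ({e, f} : Set α) ⊆ M.E := by
        rintro x (rfl | rfl); exact hGE he; exact hGE (by simpa using hf)
      have hpairG : ({e, f} : Set α) ⊆ G := by
        rintro x (rfl | rfl); exact he; simpa using hf
      have hef_indep : M.Indep {e, f} := hs _ hpairE (by
        have := Set.ncard_insert_le e ({f} : Set α)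
        simpa using this)
      set L := M.closure {e, f} with hLdef
      have hLflat : M.IsFlat L := closure_flat' M _
      have hLG : L ⊆ G := by
        have := M.closure_subset_closure hpairG
        rwa [hG.closure] at this
      have hLr : rkSet M L = 2 := by
        rw [hLdef, rkSet_closure M hpairE, indep_rkSet hef_indep, Set.ncard_pair hef]
      have hL3 : 3 ≤ L.ncard := line_three hc hmod hLflat hLr
      have hpairL : ({e, f} : Set α) ⊆ L := M.subset_closure _ hpairE
      have hdiffne : (L \ {e, f}).Nonempty := by
        rw [Set.nonempty_iff_ne_empty]
        intro hemp
        have := Set.ncard_diff hpairL (Set.toFinite _)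
        rw [hemp, Set.ncard_empty, Set.ncard_pair hef] at this
        have hle := Set.ncard_le_ncard hpairL (Set.toFinite L)
        rw [Set.ncard_pair hef] at hle
        omega
      obtain ⟨c, hcL, hcef⟩ := hdiffne
      have hce : c ≠ e := fun h => hcef (by simp [h])
      have hcf : c ≠ f := fun h => hcef (by simp [h])
      refine ⟨insert c {e, f}, ⟨⟨?_, ?_⟩, ?_⟩, by simp, by simp⟩
      · -- dep
        rw [Matroid.restrict_indep_iff]
        rintro ⟨hind, -⟩
        have := hind.notMem_closure_diff_of_mem (Set.mem_insert c _)
        have hrm : insert c ({e, f} : Set α) \ {c} = {e, f} := by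
          ext x; simp only [Set.mem_diff, Set.mem_insert_iff, Set.mem_singleton_iff]
          constructor
          · rintro ⟨rfl | h, hx⟩; exact absurd rfl hx; exact h
          · rintro (rfl | rfl)
            exact ⟨Or.inr (Or.inl rfl), hce.symm⟩
            exact ⟨Or.inr (Or.inr rfl), hcf.symm⟩
        rw [hrm] at this
        exact this hcL
      · rw [Matroid.restrict_ground_eq]
        exact Set.insert_subset (hLG hcL) hpairG
      · -- minimality
        intro D hD hDC
        have hDG : D ⊆ G := hD.subset_ground
        have hDnotindep : ¬ M.Indep D := fun h =>
          hD.not_indep (Matroid.restrict_indep_iff.2 ⟨h, hDG⟩)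
        have hD3 : 3 ≤ D.ncard := by
          by_contra hlt
          push_neg at hlt
          exact hDnotindep (hs D (hDG.trans hGE) (by omega))
        have hCcard : (insert c ({e, f} : Set α)).ncard = 3 := by
          rw [Set.ncard_insert_of_notMem (by simp [hce, hcf]) (Set.toFinite _),
            Set.ncard_pair hef]
        exact (Set.eq_of_subset_of_ncard_le hDC (by omega) (Set.toFinite _)).symm ▸ rfl
  · -- Modular
    intro F1 F2 hF1 hF2
    obtain ⟨hF1', hF1G⟩ := (flat_restrict_iff' hG).1 hF1
    obtain ⟨hF2', hF2G⟩ := (flat_restrict_iff' hG).1 hF2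
    have hunion : F1 ∪ F2 ⊆ G := Set.union_subset hF1G hF2G
    have hclosure_sub : M.closure (F1 ∪ F2) ⊆ G := by
      have := M.closure_subset_closure hunion
      rwa [hG.closure] at this
    rw [rkSet_restrict M hF1G, rkSet_restrict M hF2G,
      rkSet_restrict M (Set.inter_subset_left.trans hF1G),
      restrict_closure' M hGE hunion, Set.inter_eq_left.2 hclosure_sub,
      rkSet_restrict M hclosure_sub]
    exact hmod F1 F2 hF1' hF2'
  · -- rank-2 flats
    intro F hF hFr
    obtain ⟨hF', hFG⟩ := (flat_restrict_iff' hG).1 hF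
    rw [rkSet_restrict M hFG] at hFr
    exact line_three hc hmod hF' hFr

end KL
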